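/- Fano-type rate bound chain: If W_0, W_1, W_2 are independent uniform messages and Y_1, Y_2 are random variables with H(W_0|Y_2) <= nε_0, H(W_0,W_1|Y_1) <= nε_1, H(W_0,W_2|Y_2) <= nε_2, then n(R_0+R_1+R_2) - n(ε_0+ε_1+ε_2) <= I(W_0,W_1,W_2; Y_1) - I(W_2; Y_1|W_0) + I(W_2; Y_2|W_0), where R_b = H(W_b)/n. -/

import Mathlib

open Finset Real MeasureTheory
open scoped Classical

noncomputable section

/-- Probability of an event under a pmf on a finite sample space. -/
def probOf {Ω : Type*} [Fintype Ω] (p : Ω → ℝ) (E : Ω → Prop) : ℝ :=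
  ∑ ω, if E ω then p ω else 0

/-- `p` is a probability mass function. -/
def IsPMF {Ω : Type*} [Fintype Ω] (p : Ω → ℝ) : Prop :=
  (∀ ω, 0 ≤ p ω) ∧ ∑ ω, p ω = 1

/-- Shannon entropy of a discrete random variable `X` under the pmf `p`. -/
def entH {Ω α : Type*} [Fintype Ω] [Fintype α] (p : Ω → ℝ) (X : Ω → α) : ℝ :=
  ∑ x, Real.negMulLog (probOf p fun ω => X ω = x)

/-- Conditional entropy `H(X|Y)`. -/
def condH {Ω α β : Type*} [Fintype Ω] [Fintype α] [Fintype β]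
    (p : Ω → ℝ) (X : Ω → α) (Y : Ω → β) : ℝ :=
  entH p (fun ω => (X ω, Y ω)) - entH p Y

/-- Mutual information `I(X;Y)`. -/
def mi {Ω α β : Type*} [Fintype Ω] [Fintype α] [Fintype β]
    (p : Ω → ℝ) (X : Ω → α) (Y : Ω → β) : ℝ :=
  entH p X + entH p Y - entH p (fun ω => (X ω, Y ω))

/-- Conditional mutual information `I(X;Y|Z) = H(X|Z) - H(X|Y,Z)`. -/
def cmi {Ω α β γ : Type*} [Fintype Ω] [Fintype α] [Fintype β] [Fintype γ]
    (p : Ω → ℝ) (X : Ω → α) (Y : Ω → β) (Z : Ω → γ) : ℝ :=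
  condH p X Z - condH p X (fun ω => (Y ω, Z ω))

section Aux

variable {Ω α β γ : Type*} [Fintype Ω] [Fintype α] [Fintype β] [Fintype γ] {p : Ω → ℝ}

lemma probOf_nonneg (hp : ∀ ω, 0 ≤ p ω) (E : Ω → Prop) : 0 ≤ probOf p E :=
  Finset.sum_nonneg fun ω _ => by by_cases h : E ω <;> simp [h, hp ω]

lemma probOf_congr {E F : Ω → Prop} (h : ∀ ω, E ω ↔ F ω) : probOf p E = probOf p F :=
  Finset.sum_congr rfl fun ω _ => if_congr (h ω) rfl rfl

lemma probOf_fiber (E : Ω → Prop) (X : Ω → α) :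
    probOf p E = ∑ x, probOf p (fun ω => E ω ∧ X ω = x) := by
  unfold probOf
  rw [Finset.sum_comm]
  refine Finset.sum_congr rfl fun ω _ => ?_
  by_cases h : E ω <;> simp [h]

lemma sum_probOf (hp : IsPMF p) (X : Ω → α) :
    ∑ x, probOf p (fun ω => X ω = x) = 1 := by
  unfold probOf
  rw [Finset.sum_comm, ← hp.2]
  exact Finset.sum_congr rfl fun ω _ => by simp

lemma entH_pair (p : Ω → ℝ) (X : Ω → α) (Y : Ω → β) :
    entH p (fun ω => (X ω, Y ω)) =
      ∑ x, ∑ y, Real.negMulLog (probOf p fun ω => X ω = x ∧ Y ω = y) := by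
  unfold entH
  rw [Fintype.sum_prod_type]
  exact Finset.sum_congr rfl fun x _ => Finset.sum_congr rfl fun y _ =>
    congrArg _ (probOf_congr fun ω => by simp [Prod.ext_iff])

lemma entH_triple (p : Ω → ℝ) (X : Ω → α) (Y : Ω → β) (Z : Ω → γ) :
    entH p (fun ω => (X ω, (Y ω, Z ω))) =
      ∑ x, ∑ y, ∑ z, Real.negMulLog (probOf p fun ω => X ω = x ∧ Y ω = y ∧ Z ω = z) := by
  unfold entH
  rw [Fintype.sum_prod_type]
  refine Finset.sum_congr rfl fun x _ => ?_
  rw [Fintype.sum_prod_type]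
  exact Finset.sum_congr rfl fun y _ => Finset.sum_congr rfl fun z _ =>
    congrArg _ (probOf_congr fun ω => by simp [Prod.ext_iff])

lemma entH_comp_equiv (p : Ω → ℝ) (e : α ≃ β) (X : Ω → α) (Y : Ω → β)
    (h : ∀ ω, Y ω = e (X ω)) : entH p Y = entH p X := by
  unfold entH
  rw [← Equiv.sum_comp e fun b => Real.negMulLog (probOf p fun ω => Y ω = b)]
  refine Finset.sum_congr rfl fun x _ => congrArg _ (probOf_congr fun ω => ?_)
  rw [h ω]
  exact EmbeddingLike.apply_eq_iff_eq e

lemma negMulLog_add_le {a b : ℝ} (ha : 0 ≤ a) (hb : 0 ≤ b) :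
    Real.negMulLog (a + b) ≤ Real.negMulLog a + Real.negMulLog b := by
  have hA : a * Real.log a ≤ a * Real.log (a + b) := by
    rcases eq_or_lt_of_le ha with h | h
    · simp [← h]
    · exact mul_le_mul_of_nonneg_left (Real.log_le_log h (by linarith)) ha
  have hB : b * Real.log b ≤ b * Real.log (a + b) := by
    rcases eq_or_lt_of_le hb with h | h
    · simp [← h]
    · exact mul_le_mul_of_nonneg_left (Real.log_le_log h (by linarith)) hb
  simp only [Real.negMulLog, neg_mul, add_mul]
  linarith

lemma negMulLog_sum_le {ι : Type*} (s : Finset ι) (f : ι → ℝ) (hf : ∀ i ∈ s, 0 ≤ f i) :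
    Real.negMulLog (∑ i ∈ s, f i) ≤ ∑ i ∈ s, Real.negMulLog (f i) := by
  induction s using Finset.cons_induction with
  | empty => simp
  | cons a s ha ih =>
    rw [Finset.sum_cons, Finset.sum_cons]
    have h1 : 0 ≤ f a := hf a (Finset.mem_cons_self _ _)
    have h2 : 0 ≤ ∑ i ∈ s, f i :=
      Finset.sum_nonneg fun i hi => hf i (Finset.mem_cons_of_mem hi)
    refine le_trans (negMulLog_add_le h1 h2) ?_
    have := ih fun i hi => hf i (Finset.mem_cons_of_mem hi)
    linarith

lemma entH_snd_le_pair (hp : IsPMF p) (X : Ω → α) (Y : Ω → β) :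
    entH p Y ≤ entH p fun ω => (X ω, Y ω) := by
  rw [entH_pair, Finset.sum_comm]
  unfold entH
  refine Finset.sum_le_sum fun y _ => ?_
  rw [probOf_fiber (fun ω => Y ω = y) X]
  refine le_trans (negMulLog_sum_le _ _ fun x _ => probOf_nonneg hp.1 _) ?_
  exact le_of_eq (Finset.sum_congr rfl fun x _ =>
    congrArg _ (probOf_congr fun ω => by tauto))

lemma entH_fst_le_pair (hp : IsPMF p) (X : Ω → α) (Y : Ω → β) :
    entH p X ≤ entH p fun ω => (X ω, Y ω) := by
  have h := entH_snd_le_pair hp Y X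
  have he : entH p (fun ω => (Y ω, X ω)) = entH p (fun ω => (X ω, Y ω)) :=
    entH_comp_equiv p (Equiv.prodComm α β) _ _ fun ω => rfl
  linarith

lemma pt_ineq {q a b r : ℝ} (hq : 0 ≤ q) (hqa : q ≤ a) (hqb : q ≤ b) (har : a ≤ r) :
    q - a * b / r ≤ q * Real.log q + q * Real.log r - q * Real.log a - q * Real.log b := by
  rcases eq_or_lt_of_le hq with h | h
  · have ha : 0 ≤ a := le_trans hq hqa
    have hb : 0 ≤ b := le_trans hq hqb
    have hr : 0 ≤ r := le_trans ha har
    have : 0 ≤ a * b / r := by positivity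
    rw [← h]
    simp
    linarith
  · have ha : 0 < a := h.trans_le hqa
    have hb : 0 < b := h.trans_le hqb
    have hr : 0 < r := ha.trans_le har
    have h1 : Real.log (a * b / (q * r)) ≤ a * b / (q * r) - 1 :=
      Real.log_le_sub_one_of_pos (by positivity)
    have hlog : Real.log (a * b / (q * r)) =
        Real.log a + Real.log b - Real.log q - Real.log r := by
      rw [Real.log_div (by positivity) (by positivity), Real.log_mul ha.ne' hb.ne',
        Real.log_mul h.ne' hr.ne']
      ring
    rw [hlog] at h1
    have h3 := mul_le_mul_of_nonneg_left h1 hq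
    have h2 : q * (a * b / (q * r)) = a * b / r := by
      field_simp
    have h4 : q * (Real.log a + Real.log b - Real.log q - Real.log r)
        = q * Real.log a + q * Real.log b - q * Real.log q - q * Real.log r := by ring
    rw [h4, mul_sub, mul_one, h2] at h3
    linarith

end Aux

section Sub

variable {Ω α β γ : Type*} [Fintype Ω] [Fintype α] [Fintype β] [Fintype γ] {p : Ω → ℝ}

lemma sum_rot (f : α → β → γ → ℝ) :
    ∑ y, ∑ z, ∑ x, f x y z = ∑ x, ∑ y, ∑ z, f x y z := by
  calc ∑ y, ∑ z, ∑ x, f x y z = ∑ y, ∑ x, ∑ z, f x y z :=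
        Finset.sum_congr rfl fun y _ => Finset.sum_comm
    _ = ∑ x, ∑ y, ∑ z, f x y z := Finset.sum_comm

lemma sum_rot' (f : α → β → γ → ℝ) :
    ∑ z, ∑ x, ∑ y, f x y z = ∑ x, ∑ y, ∑ z, f x y z := by
  calc ∑ z, ∑ x, ∑ y, f x y z = ∑ x, ∑ z, ∑ y, f x y z := Finset.sum_comm
    _ = ∑ x, ∑ y, ∑ z, f x y z :=
        Finset.sum_congr rfl fun x _ => Finset.sum_comm

lemma condH_cond_pair_le (hp : IsPMF p) (X : Ω → α) (Y : Ω → β) (Z : Ω → γ) :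
    condH p X (fun ω => (Y ω, Z ω)) ≤ condH p X Z := by
  set q : α → β → γ → ℝ := fun x y z => probOf p fun ω => X ω = x ∧ Y ω = y ∧ Z ω = z with hqdef
  set A : α → γ → ℝ := fun x z => ∑ y, q x y z with hAdef
  set B : β → γ → ℝ := fun y z => ∑ x, q x y z with hBdef
  set R : γ → ℝ := fun z => ∑ x, A x z with hRdef
  have hq0 : ∀ x y z, 0 ≤ q x y z := fun x y z => probOf_nonneg hp.1 _
  have hA0 : ∀ x z, 0 ≤ A x z := fun x z => Finset.sum_nonneg fun y _ => hq0 x y z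
  have hB0 : ∀ y z, 0 ≤ B y z := fun y z => Finset.sum_nonneg fun x _ => hq0 x y z
  have hqA : ∀ x y z, q x y z ≤ A x z := fun x y z =>
    Finset.single_le_sum (fun y _ => hq0 x y z) (Finset.mem_univ y)
  have hqB : ∀ x y z, q x y z ≤ B y z := fun x y z =>
    Finset.single_le_sum (fun x _ => hq0 x y z) (Finset.mem_univ x)
  have hAR : ∀ x z, A x z ≤ R z := fun x z =>
    Finset.single_le_sum (fun x _ => hA0 x z) (Finset.mem_univ x)
  have ha : ∀ x z, probOf p (fun ω => X ω = x ∧ Z ω = z) = A x z := by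
    intro x z
    rw [probOf_fiber _ Y]
    exact Finset.sum_congr rfl fun y _ => probOf_congr fun ω => by tauto
  have hb : ∀ y z, probOf p (fun ω => Y ω = y ∧ Z ω = z) = B y z := by
    intro y z
    rw [probOf_fiber _ X]
    exact Finset.sum_congr rfl fun x _ => probOf_congr fun ω => by tauto
  have hr : ∀ z, probOf p (fun ω => Z ω = z) = R z := by
    intro z
    rw [probOf_fiber _ X]
    refine Finset.sum_congr rfl fun x _ => ?_
    rw [probOf_congr (F := fun ω => X ω = x ∧ Z ω = z) fun ω => by tauto]
    exact ha x z
  have hBR : ∀ z, ∑ y, B y z = R z := fun z => Finset.sum_comm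
  have htot : ∑ z, R z = 1 := by
    rw [← sum_probOf hp Z]
    exact Finset.sum_congr rfl fun z _ => (hr z).symm
  -- entropy expansions (canonical triple-sum order x, y, z)
  have E1 : entH p (fun ω => (X ω, (Y ω, Z ω))) = ∑ x, ∑ y, ∑ z, Real.negMulLog (q x y z) :=
    entH_triple p X Y Z
  have E2 : entH p (fun ω => (Y ω, Z ω)) = ∑ x, ∑ y, ∑ z, -(q x y z * Real.log (B y z)) := by
    rw [entH_pair, ← sum_rot (fun x y z => -(q x y z * Real.log (B y z)))]
    refine Finset.sum_congr rfl fun y _ => ?_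
    refine Finset.sum_congr rfl fun z _ => ?_
    rw [hb y z, Real.negMulLog, hBdef]
    rw [neg_mul, Finset.sum_mul, ← Finset.sum_neg_distrib]
  have E3 : entH p (fun ω => (X ω, Z ω)) = ∑ x, ∑ y, ∑ z, -(q x y z * Real.log (A x z)) := by
    rw [entH_pair]
    refine Finset.sum_congr rfl fun x _ => ?_
    rw [Finset.sum_comm]
    refine Finset.sum_congr rfl fun z _ => ?_
    rw [ha x z, Real.negMulLog, hAdef]
    rw [neg_mul, Finset.sum_mul, ← Finset.sum_neg_distrib]
  have E4 : entH p Z = ∑ x, ∑ y, ∑ z, -(q x y z * Real.log (R z)) := by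
    unfold entH
    rw [← sum_rot' (fun x y z => -(q x y z * Real.log (R z)))]
    refine Finset.sum_congr rfl fun z _ => ?_
    rw [hr z]
    have : R z * Real.log (R z) = ∑ x, ∑ y, q x y z * Real.log (R z) := by
      rw [hRdef]
      dsimp only
      rw [Finset.sum_mul]
      exact Finset.sum_congr rfl fun x _ => by rw [hAdef]; exact Finset.sum_mul _ _ _
    rw [Real.negMulLog, neg_mul, this, ← Finset.sum_neg_distrib]
    exact Finset.sum_congr rfl fun x _ => (Finset.sum_neg_distrib _).symm
  -- pointwise Gibbs bound
  have hle : ∑ x, ∑ y, ∑ z, (q x y z - A x z * B y z / R z)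
      ≤ ∑ x, ∑ y, ∑ z, (q x y z * Real.log (q x y z) + q x y z * Real.log (R z)
          - q x y z * Real.log (A x z) - q x y z * Real.log (B y z)) := by
    refine Finset.sum_le_sum fun x _ => Finset.sum_le_sum fun y _ => Finset.sum_le_sum fun z _ => ?_
    exact pt_ineq (hq0 x y z) (hqA x y z) (hqB x y z) (hAR x z)
  have hsum_q : ∑ x, ∑ y, ∑ z, q x y z = 1 := by
    rw [← sum_rot' (fun x y z => q x y z), ← htot]
  have hsum_s : ∑ x, ∑ y, ∑ z, A x z * B y z / R z = 1 := by
    rw [← sum_rot' (fun x y z => A x z * B y z / R z), ← htot]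
    refine Finset.sum_congr rfl fun z _ => ?_
    have h1 : ∀ x, ∑ y, A x z * B y z / R z = A x z * R z / R z := by
      intro x
      rw [← Finset.sum_div, ← Finset.mul_sum, hBR z]
    rw [Finset.sum_congr rfl fun x _ => h1 x]
    rcases eq_or_ne (R z) 0 with h0 | h0
    · rw [h0]
      simp
    · rw [← Finset.sum_div, ← Finset.sum_mul, hRdef]
      dsimp only
      rw [mul_div_assoc, div_self h0, mul_one]
  have heq : ∑ x, ∑ y, ∑ z, (q x y z - A x z * B y z / R z) = 0 := by
    simp only [Finset.sum_sub_distrib]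
    rw [hsum_q, hsum_s]
    ring
  have hF : 0 ≤ ∑ x, ∑ y, ∑ z, (q x y z * Real.log (q x y z) + q x y z * Real.log (R z)
      - q x y z * Real.log (A x z) - q x y z * Real.log (B y z)) := by
    rw [← heq]; exact hle
  have hcomb : ∑ x, ∑ y, ∑ z, (q x y z * Real.log (q x y z) + q x y z * Real.log (R z)
        - q x y z * Real.log (A x z) - q x y z * Real.log (B y z))
      = (∑ x, ∑ y, ∑ z, -(q x y z * Real.log (A x z)))
        - (∑ x, ∑ y, ∑ z, -(q x y z * Real.log (R z)))
        - (∑ x, ∑ y, ∑ z, Real.negMulLog (q x y z))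
        + (∑ x, ∑ y, ∑ z, -(q x y z * Real.log (B y z))) := by
    simp only [← Finset.sum_sub_distrib, ← Finset.sum_add_distrib]
    refine Finset.sum_congr rfl fun x _ => Finset.sum_congr rfl fun y _ =>
      Finset.sum_congr rfl fun z _ => ?_
    rw [Real.negMulLog]
    ring
  show entH p (fun ω => (X ω, (Y ω, Z ω))) - entH p (fun ω => (Y ω, Z ω))
      ≤ entH p (fun ω => (X ω, Z ω)) - entH p Z
  rw [E1, E2, E3, E4]
  linarith [hcomb ▸ hF]

end Sub

section Aux2
variable {Ω α : Type*} [Fintype Ω] [Fintype α] {p : Ω → ℝ}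

lemma entH_of_uniform [Nonempty α] (X : Ω → α)
    (h : ∀ x, probOf p (fun ω => X ω = x) = 1 / (Fintype.card α : ℝ)) :
    entH p X = Real.log (Fintype.card α) := by
  have hc : 0 < (Fintype.card α : ℝ) := by
    exact_mod_cast Fintype.card_pos
  have hv : Real.negMulLog (1 / (Fintype.card α : ℝ))
      = Real.log (Fintype.card α) / (Fintype.card α : ℝ) := by
    rw [Real.negMulLog, one_div, Real.log_inv]
    field_simp
  unfold entH
  simp only [h, hv]
  rw [Finset.sum_const, Finset.card_univ, nsmul_eq_mul]
  field_simp

end Aux2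


/-- **Fano-type rate bound chain.** If `W_0, W_1, W_2` are independent uniform
messages and `H(W_0|Y_2) ≤ nε_0`, `H(W_0,W_1|Y_1) ≤ nε_1`, `H(W_0,W_2|Y_2) ≤ nε_2`, then with
`R_b = H(W_b)/n`,
`n(R_0+R_1+R_2) - n(ε_0+ε_1+ε_2) ≤ I(W_0,W_1,W_2;Y_1) - I(W_2;Y_1|W_0) + I(W_2;Y_2|W_0)`. -/
theorem fano_rate_bound_chain {Ω 𝒲₀ 𝒲₁ 𝒲₂ 𝒴₁ 𝒴₂ : Type*} [Fintype Ω]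
    [Fintype 𝒲₀] [Fintype 𝒲₁] [Fintype 𝒲₂] [Fintype 𝒴₁] [Fintype 𝒴₂]
    [Nonempty 𝒲₀] [Nonempty 𝒲₁] [Nonempty 𝒲₂]
    (p : Ω → ℝ) (hp : IsPMF p)
    (W0 : Ω → 𝒲₀) (W1 : Ω → 𝒲₁) (W2 : Ω → 𝒲₂) (Y1 : Ω → 𝒴₁) (Y2 : Ω → 𝒴₂)
    (hIndep : ∀ (a : 𝒲₀) (b : 𝒲₁) (c : 𝒲₂),
      probOf p (fun ω => W0 ω = a ∧ W1 ω = b ∧ W2 ω = c)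
        = probOf p (fun ω => W0 ω = a) * probOf p (fun ω => W1 ω = b)
            * probOf p (fun ω => W2 ω = c))
    (hUnif0 : ∀ a : 𝒲₀, probOf p (fun ω => W0 ω = a) = 1 / Fintype.card 𝒲₀)
    (hUnif1 : ∀ b : 𝒲₁, probOf p (fun ω => W1 ω = b) = 1 / Fintype.card 𝒲₁)
    (hUnif2 : ∀ c : 𝒲₂, probOf p (fun ω => W2 ω = c) = 1 / Fintype.card 𝒲₂)
    (n : ℕ) (hn : 0 < n) (ε0 ε1 ε2 R0 R1 R2 : ℝ)
    (hFano0 : condH p W0 Y2 ≤ n * ε0)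
    (hFano1 : condH p (fun ω => (W0 ω, W1 ω)) Y1 ≤ n * ε1)
    (hFano2 : condH p (fun ω => (W0 ω, W2 ω)) Y2 ≤ n * ε2)
    (hR0 : R0 = entH p W0 / n) (hR1 : R1 = entH p W1 / n) (hR2 : R2 = entH p W2 / n) :
    n * (R0 + R1 + R2) - n * (ε0 + ε1 + ε2)
      ≤ mi p (fun ω => (W0 ω, W1 ω, W2 ω)) Y1
          - cmi p W2 Y1 W0 + cmi p W2 Y2 W0 := by
  subst hR0 hR1 hR2
  have hn' : (n : ℝ) ≠ 0 := Nat.cast_ne_zero.2 hn.ne'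
  set K0 : ℝ := (Fintype.card 𝒲₀ : ℝ) with hK0def
  set K1 : ℝ := (Fintype.card 𝒲₁ : ℝ) with hK1def
  set K2 : ℝ := (Fintype.card 𝒲₂ : ℝ) with hK2def
  have hK0 : 0 < K0 := by rw [hK0def]; exact_mod_cast (Fintype.card_pos (α := 𝒲₀))
  have hK1 : 0 < K1 := by rw [hK1def]; exact_mod_cast (Fintype.card_pos (α := 𝒲₁))
  have hK2 : 0 < K2 := by rw [hK2def]; exact_mod_cast (Fintype.card_pos (α := 𝒲₂))
  -- joint distributions of the messages
  have htriple : ∀ a b c, probOf p (fun ω => W0 ω = a ∧ W1 ω = b ∧ W2 ω = c)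
      = 1 / (K0 * (K1 * K2)) := by
    intro a b c
    rw [hIndep, hUnif0, hUnif1, hUnif2]
    field_simp
  have hpair01 : ∀ a b, probOf p (fun ω => W0 ω = a ∧ W1 ω = b) = 1 / (K0 * K1) := by
    intro a b
    rw [probOf_fiber _ W2]
    have : ∀ c, probOf p (fun ω => (W0 ω = a ∧ W1 ω = b) ∧ W2 ω = c)
        = 1 / (K0 * (K1 * K2)) := fun c => by
      rw [probOf_congr (F := fun ω => W0 ω = a ∧ W1 ω = b ∧ W2 ω = c) fun ω => by tauto]
      exact htriple a b c
    simp only [this]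
    rw [Finset.sum_const, Finset.card_univ, nsmul_eq_mul, ← hK2def]
    field_simp
  have hpair20 : ∀ c a, probOf p (fun ω => W2 ω = c ∧ W0 ω = a) = 1 / (K2 * K0) := by
    intro c a
    rw [probOf_fiber _ W1]
    have : ∀ b, probOf p (fun ω => (W2 ω = c ∧ W0 ω = a) ∧ W1 ω = b)
        = 1 / (K0 * (K1 * K2)) := fun b => by
      rw [probOf_congr (F := fun ω => W0 ω = a ∧ W1 ω = b ∧ W2 ω = c) fun ω => by tauto]
      exact htriple a b c
    simp only [this]
    rw [Finset.sum_const, Finset.card_univ, nsmul_eq_mul, ← hK1def]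
    field_simp
  -- entropy values
  have f0 : entH p W0 = Real.log K0 := entH_of_uniform W0 hUnif0
  have f1 : entH p W1 = Real.log K1 := entH_of_uniform W1 hUnif1
  have f2 : entH p W2 = Real.log K2 := entH_of_uniform W2 hUnif2
  have f012 : entH p (fun ω => (W0 ω, W1 ω, W2 ω))
      = Real.log K0 + Real.log K1 + Real.log K2 := by
    have := entH_of_uniform (p := p) (fun ω => (W0 ω, W1 ω, W2 ω)) (fun x => by
      obtain ⟨a, b, c⟩ := x
      rw [probOf_congr (F := fun ω => W0 ω = a ∧ W1 ω = b ∧ W2 ω = c) fun ω => by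
        simp [Prod.ext_iff, and_assoc]]
      rw [htriple a b c, Fintype.card_prod, Fintype.card_prod]
      push_cast
      rw [← hK0def, ← hK1def, ← hK2def])
    rw [this, Fintype.card_prod, Fintype.card_prod]
    push_cast
    rw [← hK0def, ← hK1def, ← hK2def, Real.log_mul hK0.ne' (by positivity),
      Real.log_mul hK1.ne' hK2.ne']
    ring
  have f20 : entH p (fun ω => (W2 ω, W0 ω)) = Real.log K2 + Real.log K0 := by
    have := entH_of_uniform (p := p) (fun ω => (W2 ω, W0 ω)) (fun x => by
      obtain ⟨c, a⟩ := x
      rw [probOf_congr (F := fun ω => W2 ω = c ∧ W0 ω = a) fun ω => by simp [Prod.ext_iff]]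
      rw [hpair20 c a, Fintype.card_prod]
      push_cast
      rw [← hK2def, ← hK0def])
    rw [this, Fintype.card_prod]
    push_cast
    rw [← hK2def, ← hK0def, Real.log_mul hK2.ne' hK0.ne']
  -- Fano hypotheses, unfolded
  have fano0 : entH p (fun ω => (W0 ω, Y2 ω)) - entH p Y2 ≤ n * ε0 := hFano0
  have fano1 : entH p (fun ω => ((W0 ω, W1 ω), Y1 ω)) - entH p Y1 ≤ n * ε1 := hFano1
  have fano2 : entH p (fun ω => ((W0 ω, W2 ω), Y2 ω)) - entH p Y2 ≤ n * ε2 := hFano2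
  -- nonnegativity facts
  have g1 : entH p Y2 ≤ entH p (fun ω => (W0 ω, Y2 ω)) := entH_snd_le_pair hp W0 Y2
  have g2 : entH p Y2 ≤ entH p (fun ω => (Y2 ω, W0 ω)) := entH_fst_le_pair hp Y2 W0
  -- rearrangement identities
  have eq1 : entH p (fun ω => (W2 ω, (Y2 ω, W0 ω)))
      = entH p (fun ω => ((W0 ω, W2 ω), Y2 ω)) :=
    entH_comp_equiv p
      (⟨fun t => (t.1.2, (t.2, t.1.1)), fun t => ((t.2.2, t.1), t.2.1),
        fun t => rfl, fun t => rfl⟩ : (𝒲₀ × 𝒲₂) × 𝒴₂ ≃ 𝒲₂ × (𝒴₂ × 𝒲₀))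
      (fun ω => ((W0 ω, W2 ω), Y2 ω)) (fun ω => (W2 ω, (Y2 ω, W0 ω))) fun ω => rfl
  have eq2 : entH p (fun ω => ((W0 ω, W1 ω, W2 ω), Y1 ω))
      = entH p (fun ω => (W2 ω, (W1 ω, (Y1 ω, W0 ω)))) :=
    entH_comp_equiv p
      (⟨fun t => ((t.2.2.2, t.2.1, t.1), t.2.2.1), fun t => (t.1.2.2, (t.1.2.1, (t.2, t.1.1))),
        fun t => rfl, fun t => rfl⟩ : 𝒲₂ × (𝒲₁ × (𝒴₁ × 𝒲₀)) ≃ (𝒲₀ × 𝒲₁ × 𝒲₂) × 𝒴₁)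
      (fun ω => (W2 ω, (W1 ω, (Y1 ω, W0 ω)))) (fun ω => ((W0 ω, W1 ω, W2 ω), Y1 ω)) fun ω => rfl
  have eq3 : entH p (fun ω => ((W0 ω, W1 ω), Y1 ω))
      = entH p (fun ω => (W1 ω, (Y1 ω, W0 ω))) :=
    entH_comp_equiv p
      (⟨fun t => ((t.2.2, t.1), t.2.1), fun t => (t.1.2, (t.2, t.1.1)),
        fun t => rfl, fun t => rfl⟩ : 𝒲₁ × (𝒴₁ × 𝒲₀) ≃ (𝒲₀ × 𝒲₁) × 𝒴₁)
      (fun ω => (W1 ω, (Y1 ω, W0 ω))) (fun ω => ((W0 ω, W1 ω), Y1 ω)) fun ω => rfl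
  -- submodularity
  have L6 : entH p (fun ω => (W2 ω, (W1 ω, (Y1 ω, W0 ω))))
        - entH p (fun ω => (W1 ω, (Y1 ω, W0 ω)))
      ≤ entH p (fun ω => (W2 ω, (Y1 ω, W0 ω))) - entH p (fun ω => (Y1 ω, W0 ω)) :=
    condH_cond_pair_le hp W2 W1 (fun ω => (Y1 ω, W0 ω))
  have key : entH p W0 + entH p W1 + entH p W2 - (n * ε0 + n * ε1 + n * ε2)
      ≤ (entH p (fun ω => (W0 ω, W1 ω, W2 ω)) + entH p Y1
          - entH p (fun ω => ((W0 ω, W1 ω, W2 ω), Y1 ω)))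
        - ((entH p (fun ω => (W2 ω, W0 ω)) - entH p W0)
          - (entH p (fun ω => (W2 ω, (Y1 ω, W0 ω))) - entH p (fun ω => (Y1 ω, W0 ω))))
        + ((entH p (fun ω => (W2 ω, W0 ω)) - entH p W0)
          - (entH p (fun ω => (W2 ω, (Y2 ω, W0 ω))) - entH p (fun ω => (Y2 ω, W0 ω)))) := by
    linarith
  calc (n : ℝ) * (entH p W0 / n + entH p W1 / n + entH p W2 / n) - n * (ε0 + ε1 + ε2)
      = entH p W0 + entH p W1 + entH p W2 - (n * ε0 + n * ε1 + n * ε2) := by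
        field_simp
    _ ≤ _ := key
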